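/- The graph of the 3-dimensional cube (the 3-cube graph Q₃) has no spanning tree without degree-2 vertices; i.e., every spanning tree of Q₃ contains a vertex of degree 2. -/

import Mathlib

/-- The 3-cube graph `Q₃` on vertex set `{0,1}³`: two vertices are adjacent iff they differ
in exactly one coordinate. -/
def cubeGraphQ3 : SimpleGraph (Fin 3 → Fin 2) where
  Adj x y := (Finset.univ.filter fun i => x i ≠ y i).card = 1
  symm := by
    constructor
    intro x y h
    simpa [ne_comm] using h
  loopless := by
    constructor
    intro x h
    simp at h

instance : DecidableRel cubeGraphQ3.Adj := fun x y =>
  inferInstanceAs (Decidable ((Finset.univ.filter fun i => x i ≠ y i).card = 1))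

def cubeEdges : Fin 12 → Fin 8 × Fin 8 :=
  ![(0,1),(0,2),(0,4),(1,3),(1,5),(2,3),(2,6),(3,7),(4,5),(4,6),(5,7),(6,7)]

def cubeVerts : Fin 8 → (Fin 3 → Fin 2) :=
  ![![0,0,0],![0,0,1],![0,1,0],![0,1,1],![1,0,0],![1,0,1],![1,1,0],![1,1,1]]

def cubeESym (i : Fin 12) : Sym2 (Fin 3 → Fin 2) :=
  s(cubeVerts (cubeEdges i).1, cubeVerts (cubeEdges i).2)

def degB (f : Fin 12 → Bool) (j : Fin 8) : ℕ :=
  (Finset.univ.filter fun i => f i = true ∧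
      ((cubeEdges i).1 = j ∨ (cubeEdges i).2 = j)).card

set_option maxRecDepth 100000 in
set_option maxHeartbeats 10000000 in
lemma boolKey : ∀ b0 b1 b2 b3 b4 b5 b6 b7 b8 b9 b10 b11 : Bool,
    (Finset.univ.filter fun i => ![b0,b1,b2,b3,b4,b5,b6,b7,b8,b9,b10,b11] i = true).card = 7 →
    ∃ j : Fin 8, degB ![b0,b1,b2,b3,b4,b5,b6,b7,b8,b9,b10,b11] j = 0 ∨
      degB ![b0,b1,b2,b3,b4,b5,b6,b7,b8,b9,b10,b11] j = 2 := by
  decide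

lemma cubeAdj_mem (x y : Fin 3 → Fin 2) (h : cubeGraphQ3.Adj x y) :
    ∃ i, s(x, y) = cubeESym i := by
  revert h
  revert x y
  decide

lemma cubeESym_inj : Function.Injective cubeESym := by
  intro a b
  revert a b
  decide

lemma cubeMem_iff : ∀ (j : Fin 8) (i : Fin 12),
    cubeVerts j ∈ cubeESym i ↔ ((cubeEdges i).1 = j ∨ (cubeEdges i).2 = j) := by
  decide

lemma cubeVerts_surj : ∀ v : Fin 3 → Fin 2, ∃ j, cubeVerts j = v := by
  decide

/-- The 3-cube graph `Q₃` has no spanning tree without degree-2 vertices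
(it is HIST-free): every spanning tree of `Q₃` contains a vertex of degree 2. -/
theorem cube_has_no_HIST (T : SimpleGraph (Fin 3 → Fin 2)) [DecidableRel T.Adj]
    (hle : T ≤ cubeGraphQ3) (hT : T.IsTree) :
    ∃ v, T.degree v = 2 := by
  by_contra hcon
  push_neg at hcon
  classical
  set s : Finset (Sym2 (Fin 3 → Fin 2)) := T.edgeFinset with hs
  have hs7 : s.card = 7 := by
    have h8 := hT.card_edgeFinset
    rw [show Fintype.card (Fin 3 → Fin 2) = 8 by simp] at h8
    rw [hs]
    omega
  set f : Fin 12 → Bool := fun i => decide (cubeESym i ∈ s) with hfdef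
  have hf : ∀ i, f i = true ↔ cubeESym i ∈ s := by
    intro i; simp [hfdef]
  have hs_eq : s = (Finset.univ.filter fun i => f i = true).image cubeESym := by
    ext e
    constructor
    · intro he
      induction e using Sym2.ind with
      | _ x y =>
        have hadj : T.Adj x y := by
          rwa [hs, SimpleGraph.mem_edgeFinset, SimpleGraph.mem_edgeSet] at he
        obtain ⟨i, hi⟩ := cubeAdj_mem x y (hle hadj)
        refine Finset.mem_image.2 ⟨i, ?_, hi.symm⟩
        simp [hf, ← hi, he]
    · intro he
      obtain ⟨i, hfi, rfl⟩ := Finset.mem_image.1 he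
      exact (hf i).1 (Finset.mem_filter.1 hfi).2
  have hcard : (Finset.univ.filter fun i => f i = true).card = 7 := by
    rw [hs_eq, Finset.card_image_of_injective _ cubeESym_inj] at hs7
    exact hs7
  have hfe : ![f 0, f 1, f 2, f 3, f 4, f 5, f 6, f 7, f 8, f 9, f 10, f 11] = f := by
    funext i; fin_cases i <;> rfl
  obtain ⟨j, hj⟩ := boolKey (f 0) (f 1) (f 2) (f 3) (f 4) (f 5) (f 6) (f 7) (f 8) (f 9)
      (f 10) (f 11) (by rw [hfe]; exact hcard)
  rw [hfe] at hj
  have hdeg : T.degree (cubeVerts j) = degB f j := by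
    rw [← SimpleGraph.card_incidenceFinset_eq_degree,
      SimpleGraph.incidenceFinset_eq_filter]
    have : ({e ∈ T.edgeFinset | cubeVerts j ∈ e} : Finset _)
        = ((Finset.univ.filter fun i => f i = true ∧ cubeVerts j ∈ cubeESym i).image cubeESym) := by
      rw [← hs, hs_eq, Finset.filter_image, Finset.filter_filter]
    rw [this, Finset.card_image_of_injective _ cubeESym_inj, degB]
    congr 1
    apply Finset.filter_congr
    intro i _
    rw [cubeMem_iff j i]
  cases hj with
  | inl h0 =>
    have hpos : 0 < T.degree (cubeVerts j) := by
      rw [SimpleGraph.degree_pos_iff_exists_adj]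
      obtain ⟨u, hu⟩ := Fintype.exists_ne_of_one_lt_card (by simp) (cubeVerts j)
      obtain ⟨w⟩ := hT.isConnected.preconnected (cubeVerts j) u
      cases w with
      | nil => exact absurd rfl hu
      | cons h _ => exact ⟨_, h⟩
    omega
  | inr h2 => exact hcon (cubeVerts j) (by rw [hdeg, h2])
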